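/- Let gamma ∈ (3,4). There exists a constant C̄ > 0 (depending only on gamma) such that the following holds. Let eps ∈ (0,1/50], s0 > 0, let phi : [s0,∞) → [0,∞) satisfy J := ∫_{s0}^∞ s^gamma·phi(s) ds < ∞, and let b : [s0,∞) → ℝ be differentiable with |b'(s)+b(s)²| ≤ √(phi(s)) and (1-eps)/s ≤ b(s) ≤ (1+eps)/s for all s ≥ s0. Define b̃ : [s0,∞) → ℝ as the solution of b̃' + b·b̃ = 0 with b̃(s0) = 1/s0. If s0 ≥ C̄·(J·eps^{-2})^{1/(gamma-3)}, then (1-2·eps)/s ≤ b̃(s) ≤ (1+2·eps)/s for all s ≥ s0. -/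

import Mathlib

open Set MeasureTheory Filter
open scoped Topology

private lemma amgm_aux {lam A B : ℝ} (hl : 0 < lam) :
    A * B ≤ (lam * A ^ 2 + lam⁻¹ * B ^ 2) / 2 := by
  have key2 : (2 * lam) * (A * B) ≤ (2 * lam) * ((lam * A ^ 2 + lam⁻¹ * B ^ 2) / 2) := by
    have h1b : lam * lam⁻¹ * B ^ 2 = B ^ 2 := by
      rw [mul_inv_cancel₀ (ne_of_gt hl), one_mul]
    nlinarith [sq_nonneg (lam * A - B)]
  exact le_of_mul_le_mul_left key2 (by positivity)

private lemma abs_sub_le_integral_aux {f f' g : ℝ → ℝ} {a b : ℝ} (hab : a ≤ b)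
    (hcont : ContinuousOn f (Icc a b))
    (hderiv : ∀ x ∈ Ioo a b, HasDerivWithinAt f (f' x) (Ioi x) x)
    (hgint : IntegrableOn g (Icc a b) volume)
    (hbound : ∀ x ∈ Ioo a b, |f' x| ≤ g x) :
    |f b - f a| ≤ ∫ y in a..b, g y := by
  have h1 := intervalIntegral.sub_le_integral_of_hasDeriv_right_of_le hab hcont hderiv hgint
    (fun x hx => le_trans (le_abs_self _) (hbound x hx))
  have h2 := intervalIntegral.sub_le_integral_of_hasDeriv_right_of_le hab hcont.neg
    (fun x hx => (hderiv x hx).neg) hgint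
    (fun x hx => le_trans (neg_le_abs _) (hbound x hx))
  have h2' : f a - f b ≤ ∫ y in a..b, g y := by
    simp only [Pi.neg_apply] at h2; linarith
  exact abs_sub_le_iff.mpr ⟨h1, h2'⟩

set_option maxHeartbeats 1600000 in
/-- The regularized modulation rate `b̃`, solving `b̃' = -b·b̃` with `b̃(s0) = 1/s0`,
satisfies `(1-2ε)/s ≤ b̃(s) ≤ (1+2ε)/s` provided `s0` is large enough. -/
theorem regularized_modulation_rate (gamma : ℝ) (hgamma : gamma ∈ Ioo (3:ℝ) 4) :
    ∃ Cbar : ℝ, 0 < Cbar ∧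
      ∀ (eps s0 : ℝ) (phi b b' btil : ℝ → ℝ),
        eps ∈ Ioc (0:ℝ) (1/50) → 0 < s0 →
        (∀ s ∈ Ici s0, 0 ≤ phi s) →
        IntegrableOn (fun s => s ^ gamma * phi s) (Ioi s0) →
        (∀ s ∈ Ici s0, HasDerivWithinAt b (b' s) (Ici s0) s) →
        (∀ s ∈ Ici s0, |b' s + b s ^ 2| ≤ Real.sqrt (phi s)) →
        (∀ s ∈ Ici s0, (1 - eps) / s ≤ b s ∧ b s ≤ (1 + eps) / s) →
        (∀ s ∈ Ici s0, HasDerivWithinAt btil (-(b s * btil s)) (Ici s0) s) →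
        btil s0 = 1 / s0 →
        Cbar * ((∫ s in Ioi s0, s ^ gamma * phi s) / eps ^ 2) ^ (1 / (gamma - 3)) ≤ s0 →
        ∀ s ∈ Ici s0, (1 - 2 * eps) / s ≤ btil s ∧ btil s ≤ (1 + 2 * eps) / s := by
  obtain ⟨hg3, hg4⟩ := hgamma
  have hg3' : (0:ℝ) < gamma - 3 := by linarith
  refine ⟨(16 / (gamma - 3)) ^ (2 / (gamma - 3)), Real.rpow_pos_of_pos (by positivity) _, ?_⟩
  intro eps s0 phi b b' btil heps hs0 hphi hint hb hbe hbb hbtil hbtil0 hs0large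
  obtain ⟨heps0, heps50⟩ := heps
  have heps1 : eps < 1 := by linarith
  set J := ∫ s in Ioi s0, s ^ gamma * phi s with hJdef
  have hnnJ : 0 ≤ᵐ[volume.restrict (Ioi s0)] (fun τ => τ ^ gamma * phi τ) :=
    (ae_restrict_iff' measurableSet_Ioi).mpr (ae_of_all _ fun τ (hτ : τ ∈ Ioi s0) =>
      mul_nonneg (Real.rpow_nonneg (le_of_lt (hs0.trans hτ)) _) (hphi τ (Ioi_subset_Ici_self hτ)))
  have hJ0 : 0 ≤ J := setIntegral_nonneg measurableSet_Ioi fun t ht =>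
    mul_nonneg (Real.rpow_nonneg (le_of_lt (hs0.trans ht)) _) (hphi t (Ioi_subset_Ici_self ht))
  have hsJ : 0 ≤ Real.sqrt J := Real.sqrt_nonneg J
  have htpos : ∀ t ∈ Ici s0, (0:ℝ) < t := fun t ht => lt_of_lt_of_le hs0 ht
  have hbpos : ∀ t ∈ Ici s0, 0 < b t := fun t ht =>
    lt_of_lt_of_le (div_pos (by linarith) (htpos t ht)) (hbb t ht).1
  have hbne : ∀ t ∈ Ici s0, b t ≠ 0 := fun t ht => ne_of_gt (hbpos t ht)
  have hu_lb : ∀ t ∈ Ici s0, t / (1 + eps) ≤ (b t)⁻¹ := by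
    intro t ht
    calc t / (1 + eps) = ((1 + eps) / t)⁻¹ := by rw [inv_div]
      _ ≤ (b t)⁻¹ := inv_anti₀ (hbpos t ht) (hbb t ht).2
  have hu_ub : ∀ t ∈ Ici s0, (b t)⁻¹ ≤ t / (1 - eps) := by
    intro t ht
    calc (b t)⁻¹ ≤ ((1 - eps) / t)⁻¹ :=
          inv_anti₀ (div_pos (by linarith) (htpos t ht)) (hbb t ht).1
      _ = t / (1 - eps) := by rw [inv_div]
  set c := (b s0)⁻¹ - s0 with hcdef
  have hs0mem : s0 ∈ Ici s0 := self_mem_Ici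
  have hs0c_eq : s0 + c = (b s0)⁻¹ := by rw [hcdef]; ring
  have hs0c : 0 < s0 + c := hs0c_eq ▸ inv_pos.mpr (hbpos s0 hs0mem)
  have hclow : -(eps * s0) ≤ (1 + eps) * c := by
    have h := hu_lb s0 hs0mem
    rw [← hs0c_eq, div_le_iff₀ (by linarith : (0:ℝ) < 1 + eps)] at h
    nlinarith
  have hchigh : (1 - eps) * c ≤ eps * s0 := by
    have h := hu_ub s0 hs0mem
    rw [← hs0c_eq, le_div_iff₀ (by linarith : (0:ℝ) < 1 - eps)] at h
    nlinarith
  have hcabs_low : -(eps * s0) ≤ c := by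
    rcases le_or_gt 0 c with h | h
    · nlinarith [mul_pos heps0 hs0]
    · nlinarith [mul_neg_of_pos_of_neg heps0 h]
  have htc : ∀ t ∈ Ici s0, (1 - eps) * t ≤ t + c := by
    intro t ht
    have h1 : eps * s0 ≤ eps * t := mul_le_mul_of_nonneg_left (mem_Ici.mp ht) heps0.le
    linarith
  have htcpos : ∀ t ∈ Ici s0, 0 < t + c := fun t ht =>
    lt_of_lt_of_le (mul_pos (by linarith) (htpos t ht)) (htc t ht)
  -- Claim A : quantitative bound `|1/b(t) - (t + c)| ≤ 2√J t^((5-γ)/2)`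
  have hR : ∀ t ∈ Ici s0, |((b t)⁻¹ - t) - ((b s0)⁻¹ - s0)| ≤
      2 * Real.sqrt J * t ^ ((5 - gamma) / 2) := by
    intro t ht
    have htp : 0 < t := htpos t ht
    have hfd : ∀ x ∈ Ioo s0 t, HasDerivWithinAt (fun τ => (b τ)⁻¹ - τ)
        (-(b' x) / b x ^ 2 - 1) (Ioi x) x := by
      intro x hx
      have hx0 : s0 ≤ x := hx.1.le
      have hbx : HasDerivAt b (b' x) x := (hb x hx0).hasDerivAt (Ici_mem_nhds hx.1)
      exact ((hbx.inv (hbne x hx0)).sub (hasDerivAt_id x)).hasDerivWithinAt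
    have hfc : ContinuousOn (fun τ => (b τ)⁻¹ - τ) (Icc s0 t) := by
      apply ContinuousOn.sub _ continuousOn_id
      apply ContinuousOn.mono _ (Icc_subset_Ici_self (a := t) (b := s0))
      exact ContinuousOn.inv₀ (fun x hx => (hb x hx).continuousWithinAt) hbne
    have hf'bound : ∀ x ∈ Ioo s0 t, |(-(b' x) / b x ^ 2 - 1)| ≤
        (x / (1 - eps)) ^ 2 * Real.sqrt (phi x) := by
      intro x hx
      have hx0 : x ∈ Ici s0 := hx.1.le
      have hxp : 0 < x := htpos x hx0
      have hbx0 : b x ≠ 0 := hbne x hx0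
      have heq : -(b' x) / b x ^ 2 - 1 = -((b' x + b x ^ 2) / b x ^ 2) := by
        field_simp
        ring
      rw [heq, abs_neg, abs_div, abs_of_pos (pow_pos (hbpos x hx0) 2),
        div_le_iff₀ (pow_pos (hbpos x hx0) 2)]
      have key : 1 ≤ x / (1 - eps) * b x := by
        have h2 : 1 - eps ≤ b x * x := (div_le_iff₀ hxp).mp (hbb x hx0).1
        rw [div_mul_eq_mul_div, le_div_iff₀ (by linarith : (0:ℝ) < 1 - eps)]
        nlinarith
      calc |b' x + b x ^ 2| ≤ Real.sqrt (phi x) := hbe x hx0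
        _ = Real.sqrt (phi x) * 1 := (mul_one _).symm
        _ ≤ Real.sqrt (phi x) * (x / (1 - eps) * b x) ^ 2 := by
            apply mul_le_mul_of_nonneg_left _ (Real.sqrt_nonneg _)
            nlinarith
        _ = (x / (1 - eps)) ^ 2 * Real.sqrt (phi x) * b x ^ 2 := by ring
    rcases eq_or_lt_of_le hJ0 with hJz | hJpos
    · -- case J = 0 : `phi` vanishes a.e.
      have hae : (fun τ => τ ^ gamma * phi τ) =ᵐ[volume.restrict (Ioi s0)] 0 :=
        (integral_eq_zero_iff_of_nonneg_ae hnnJ hint).mp hJz.symm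
      have hg0ae : (fun τ => (τ / (1 - eps)) ^ 2 * Real.sqrt (phi τ))
          =ᵐ[volume.restrict (Icc s0 t)] 0 := by
        have h1 : ∀ᵐ τ ∂volume, τ ∈ Ioi s0 → τ ^ gamma * phi τ = 0 :=
          (ae_restrict_iff' measurableSet_Ioi).mp hae
        have h2 : ∀ᵐ (τ : ℝ) ∂volume, τ ≠ s0 := by
          rw [ae_iff]
          have he : {τ : ℝ | ¬τ ≠ s0} = {s0} := by ext τ; simp
          rw [he]
          exact Real.volume_singleton
        refine (ae_restrict_iff' measurableSet_Icc).mpr ?_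
        filter_upwards [h1, h2] with τ hτ1 hτ2 hτmem
        have hτIoi : τ ∈ Ioi s0 := lt_of_le_of_ne hτmem.1 (Ne.symm hτ2)
        have hzero := hτ1 hτIoi
        have hφ0 : phi τ = 0 := by
          have hτp : (0:ℝ) < τ := hs0.trans hτIoi
          rcases mul_eq_zero.mp hzero with h | h
          · exact absurd h (ne_of_gt (Real.rpow_pos_of_pos hτp _))
          · exact h
        simp [hφ0]
      have hg0int : IntegrableOn (fun τ => (τ / (1 - eps)) ^ 2 * Real.sqrt (phi τ))
          (Icc s0 t) := (integrable_zero _ _ _).congr hg0ae.symm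
      have hint0 : ∫ y in s0..t, (y / (1 - eps)) ^ 2 * Real.sqrt (phi y) = 0 := by
        rw [intervalIntegral.integral_of_le ht]
        have hae2 : (fun τ => (τ / (1 - eps)) ^ 2 * Real.sqrt (phi τ))
            =ᵐ[volume.restrict (Ioc s0 t)] 0 :=
          hg0ae.filter_mono (ae_mono (Measure.restrict_mono Ioc_subset_Icc_self le_rfl))
        rw [integral_congr_ae hae2]
        simp
      have habs := abs_sub_le_integral_aux (f' := fun x => -(b' x) / b x ^ 2 - 1)
        ht hfc hfd hg0int hf'bound
      rw [hint0] at habs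
      have hz : 2 * Real.sqrt J * t ^ ((5 - gamma) / 2) = 0 := by
        rw [← hJz, Real.sqrt_zero]; ring
      rw [hz]
      simpa using habs
    · -- case J > 0
      have hsJpos : 0 < Real.sqrt J := Real.sqrt_pos.mpr hJpos
      set lam := Real.sqrt J / t ^ ((5 - gamma) / 2) with hlam
      have hlampos : 0 < lam := div_pos hsJpos (Real.rpow_pos_of_pos htp _)
      have hbound1 : ∀ x ∈ Ioo s0 t, |(-(b' x) / b x ^ 2 - 1)| ≤
          (1 - eps)⁻¹ ^ 2 / 2 * (lam * x ^ (4 - gamma))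
            + (1 - eps)⁻¹ ^ 2 / 2 * (lam⁻¹ * (x ^ gamma * phi x)) := by
        intro x hx
        refine le_trans (hf'bound x hx) ?_
        have hx0 : x ∈ Ici s0 := hx.1.le
        have hxp : 0 < x := htpos x hx0
        have hAB : x ^ ((4 - gamma) / 2) * (x ^ (gamma / 2) * Real.sqrt (phi x))
            = x ^ 2 * Real.sqrt (phi x) := by
          rw [← mul_assoc, ← Real.rpow_add hxp,
            show (4 - gamma) / 2 + gamma / 2 = ((2:ℕ):ℝ) by push_cast; ring,
            Real.rpow_natCast]
        have hA2 : (x ^ ((4 - gamma) / 2)) ^ 2 = x ^ (4 - gamma) := by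
          rw [← Real.rpow_natCast (x ^ ((4 - gamma) / 2)) 2, ← Real.rpow_mul hxp.le]
          norm_num
        have hB2 : (x ^ (gamma / 2) * Real.sqrt (phi x)) ^ 2 = x ^ gamma * phi x := by
          rw [mul_pow, Real.sq_sqrt (hphi x hx0), ← Real.rpow_natCast (x ^ (gamma / 2)) 2,
            ← Real.rpow_mul hxp.le]
          norm_num
        have hamgm := amgm_aux (A := x ^ ((4 - gamma) / 2))
          (B := x ^ (gamma / 2) * Real.sqrt (phi x)) hlampos
        calc (x / (1 - eps)) ^ 2 * Real.sqrt (phi x)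
            = (1 - eps)⁻¹ ^ 2 * (x ^ 2 * Real.sqrt (phi x)) := by ring
          _ ≤ (1 - eps)⁻¹ ^ 2 *
              ((lam * x ^ (4 - gamma) + lam⁻¹ * (x ^ gamma * phi x)) / 2) := by
              apply mul_le_mul_of_nonneg_left _ (by positivity)
              calc x ^ 2 * Real.sqrt (phi x)
                  = x ^ ((4 - gamma) / 2) * (x ^ (gamma / 2) * Real.sqrt (phi x)) := hAB.symm
                _ ≤ (lam * (x ^ ((4 - gamma) / 2)) ^ 2
                    + lam⁻¹ * (x ^ (gamma / 2) * Real.sqrt (phi x)) ^ 2) / 2 := hamgm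
                _ = (lam * x ^ (4 - gamma) + lam⁻¹ * (x ^ gamma * phi x)) / 2 := by
                    rw [hA2, hB2]
          _ = (1 - eps)⁻¹ ^ 2 / 2 * (lam * x ^ (4 - gamma))
              + (1 - eps)⁻¹ ^ 2 / 2 * (lam⁻¹ * (x ^ gamma * phi x)) := by ring
      have hip1 : IntegrableOn (fun τ => lam * τ ^ (4 - gamma)) (Icc s0 t) := by
        apply ContinuousOn.integrableOn_Icc
        exact continuousOn_const.mul (ContinuousOn.rpow_const continuousOn_id
          (fun x hx => Or.inl (ne_of_gt (lt_of_lt_of_le hs0 hx.1))))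
      have hip2 : IntegrableOn (fun τ => lam⁻¹ * (τ ^ gamma * phi τ)) (Icc s0 t) := by
        rw [integrableOn_Icc_iff_integrableOn_Ioc]
        exact (hint.mono_set Ioc_subset_Ioi_self).const_mul lam⁻¹
      have hg1int : IntegrableOn (fun τ =>
          (1 - eps)⁻¹ ^ 2 / 2 * (lam * τ ^ (4 - gamma))
            + (1 - eps)⁻¹ ^ 2 / 2 * (lam⁻¹ * (τ ^ gamma * phi τ))) (Icc s0 t) :=
        (hip1.const_mul _).add (hip2.const_mul _)
      have habs := abs_sub_le_integral_aux (f' := fun x => -(b' x) / b x ^ 2 - 1)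
        ht hfc hfd hg1int hbound1
      refine le_trans habs ?_
      have hii1 : IntervalIntegrable (fun τ => lam * τ ^ (4 - gamma)) volume s0 t := by
        rw [intervalIntegrable_iff_integrableOn_Ioc_of_le ht]
        exact hip1.mono_set Ioc_subset_Icc_self
      have hii2 : IntervalIntegrable (fun τ => lam⁻¹ * (τ ^ gamma * phi τ)) volume s0 t := by
        rw [intervalIntegrable_iff_integrableOn_Ioc_of_le ht]
        exact hip2.mono_set Ioc_subset_Icc_self
      have he1 : ∫ y in s0..t, (1 - eps)⁻¹ ^ 2 / 2 * (lam * y ^ (4 - gamma))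
          = (1 - eps)⁻¹ ^ 2 / 2 * ∫ y in s0..t, lam * y ^ (4 - gamma) :=
        intervalIntegral.integral_const_mul _ _
      have he2 : ∫ y in s0..t, (1 - eps)⁻¹ ^ 2 / 2 * (lam⁻¹ * (y ^ gamma * phi y))
          = (1 - eps)⁻¹ ^ 2 / 2 * ∫ y in s0..t, lam⁻¹ * (y ^ gamma * phi y) :=
        intervalIntegral.integral_const_mul _ _
      have hgsplit : ∫ y in s0..t,
          ((1 - eps)⁻¹ ^ 2 / 2 * (lam * y ^ (4 - gamma))
            + (1 - eps)⁻¹ ^ 2 / 2 * (lam⁻¹ * (y ^ gamma * phi y)))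
          = (1 - eps)⁻¹ ^ 2 / 2 * (∫ y in s0..t, lam * y ^ (4 - gamma)) +
            (1 - eps)⁻¹ ^ 2 / 2 * (∫ y in s0..t, lam⁻¹ * (y ^ gamma * phi y)) := by
        rw [intervalIntegral.integral_add (hii1.const_mul _) (hii2.const_mul _), he1, he2]
      have h5g : (0:ℝ) < 5 - gamma := by linarith
      have hI1 : ∫ y in s0..t, lam * y ^ (4 - gamma)
          ≤ Real.sqrt J * t ^ ((5 - gamma) / 2) := by
        rw [intervalIntegral.integral_const_mul,
          integral_rpow (Or.inl (by linarith : (-1:ℝ) < 4 - gamma)),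
          show (4:ℝ) - gamma + 1 = 5 - gamma by ring]
        have hXpos : (0:ℝ) ≤ t ^ (5 - gamma) := Real.rpow_nonneg htp.le _
        have hYpos : (0:ℝ) ≤ s0 ^ (5 - gamma) := Real.rpow_nonneg hs0.le _
        have hstep : (t ^ (5 - gamma) - s0 ^ (5 - gamma)) / (5 - gamma) ≤ t ^ (5 - gamma) := by
          rw [div_le_iff₀ h5g]
          nlinarith
        have hfin : lam * t ^ (5 - gamma) = Real.sqrt J * t ^ ((5 - gamma) / 2) := by
          rw [hlam, div_mul_eq_mul_div, mul_div_assoc, ← Real.rpow_sub htp,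
            show 5 - gamma - (5 - gamma) / 2 = (5 - gamma) / 2 by ring]
        calc lam * ((t ^ (5 - gamma) - s0 ^ (5 - gamma)) / (5 - gamma))
            ≤ lam * t ^ (5 - gamma) := mul_le_mul_of_nonneg_left hstep hlampos.le
          _ = Real.sqrt J * t ^ ((5 - gamma) / 2) := hfin
      have hI2 : ∫ y in s0..t, lam⁻¹ * (y ^ gamma * phi y)
          ≤ Real.sqrt J * t ^ ((5 - gamma) / 2) := by
        rw [intervalIntegral.integral_const_mul]
        have hmono : ∫ y in s0..t, y ^ gamma * phi y ≤ J := by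
          rw [intervalIntegral.integral_of_le ht, hJdef]
          exact setIntegral_mono_set hint hnnJ
            (HasSubset.Subset.eventuallyLE Ioc_subset_Ioi_self)
        have hfin : lam⁻¹ * J = Real.sqrt J * t ^ ((5 - gamma) / 2) := by
          rw [hlam, inv_div, div_mul_eq_mul_div, mul_div_assoc, Real.div_sqrt, mul_comm]
        calc lam⁻¹ * ∫ y in s0..t, y ^ gamma * phi y ≤ lam⁻¹ * J :=
              mul_le_mul_of_nonneg_left hmono (inv_pos.mpr hlampos).le
          _ = Real.sqrt J * t ^ ((5 - gamma) / 2) := hfin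
      have hKle : (1 - eps)⁻¹ ^ 2 ≤ 2 := by
        have h1 : (1 - eps)⁻¹ ≤ (49/50 : ℝ)⁻¹ :=
          inv_anti₀ (by norm_num) (by linarith)
        have h2 : (0:ℝ) ≤ (1 - eps)⁻¹ := inv_nonneg.mpr (by linarith)
        nlinarith
      have hXnn : 0 ≤ Real.sqrt J * t ^ ((5 - gamma) / 2) := by positivity
      rw [hgsplit]
      have hKenn : (0:ℝ) ≤ (1 - eps)⁻¹ ^ 2 / 2 := by positivity
      nlinarith [mul_le_mul_of_nonneg_left hI1 hKenn, mul_le_mul_of_nonneg_left hI2 hKenn,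
        mul_le_mul_of_nonneg_right hKle hXnn]
      
  -- Claim B : pointwise bound `|b(x) - 1/(x+c)| ≤ 4√J x^((1-γ)/2)`
  have hbc : ∀ x ∈ Ici s0, |b x - (x + c)⁻¹| ≤
      4 * Real.sqrt J * x ^ ((1 - gamma) / 2) := by
    intro x hx
    have hxp : 0 < x := htpos x hx
    have hbx : 0 < b x := hbpos x hx
    have hxc : 0 < x + c := htcpos x hx
    have hbx0 : b x ≠ 0 := hbne x hx
    have hxc0 : x + c ≠ 0 := ne_of_gt hxc
    have heq : b x - (x + c)⁻¹ =
        -((((b x)⁻¹ - x) - ((b s0)⁻¹ - s0)) * b x * (x + c)⁻¹) := by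
      have hcc : (b s0)⁻¹ - s0 = c := by rw [hcdef]
      rw [hcc]
      field_simp
      ring
    rw [heq, abs_neg, abs_mul, abs_mul]
    have h1 := hR x hx
    have h2 : |b x| ≤ (1 + eps) / x := by
      rw [abs_of_pos hbx]; exact (hbb x hx).2
    have h3 : |(x + c)⁻¹| ≤ ((1 - eps) * x)⁻¹ := by
      rw [abs_of_pos (inv_pos.mpr hxc)]
      exact inv_anti₀ (mul_pos (by linarith) hxp) (htc x hx)
    have hx2 : x ^ ((5 - gamma) / 2) * x⁻¹ * x⁻¹ = x ^ ((1 - gamma) / 2) := by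
      rw [← Real.rpow_neg_one x, ← Real.rpow_add hxp, ← Real.rpow_add hxp]
      congr 1; ring
    have hcoef : 2 * ((1 + eps) * (1 - eps)⁻¹) ≤ 4 := by
      have h1e : (0:ℝ) < 1 - eps := by linarith
      have : (1 + eps) * (1 - eps)⁻¹ ≤ 2 := by
        rw [← div_eq_mul_inv, div_le_iff₀ h1e]; linarith
      linarith
    calc |((b x)⁻¹ - x) - ((b s0)⁻¹ - s0)| * |b x| * |(x + c)⁻¹|
        ≤ (2 * Real.sqrt J * x ^ ((5 - gamma) / 2)) * ((1 + eps) / x) * ((1 - eps) * x)⁻¹ := by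
          apply mul_le_mul _ h3 (abs_nonneg _) (by positivity)
          exact mul_le_mul h1 h2 (abs_nonneg _) (by positivity)
      _ = 2 * ((1 + eps) * (1 - eps)⁻¹) *
          (Real.sqrt J * (x ^ ((5 - gamma) / 2) * x⁻¹ * x⁻¹)) := by
          rw [mul_inv, div_eq_mul_inv]
          ring
      _ ≤ 4 * (Real.sqrt J * (x ^ ((5 - gamma) / 2) * x⁻¹ * x⁻¹)) := by
          apply mul_le_mul_of_nonneg_right hcoef
          positivity
      _ = 4 * Real.sqrt J * x ^ ((1 - gamma) / 2) := by rw [hx2]; ring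
  -- the integrated modulation rate
  have hbcont : ContinuousOn b (Ici s0) := fun x hx => (hb x hx).continuousWithinAt
  have hbextcont : Continuous (fun τ => b (max τ s0)) :=
    hbcont.comp_continuous (continuous_id.max continuous_const) (fun x => le_max_right x s0)
  set Bf : ℝ → ℝ := (fun r => ∫ τ in s0..r, b (max τ s0)) with hBfdef
  have hBd : ∀ r : ℝ, HasDerivAt Bf (b (max r s0)) r := fun r =>
    (hbextcont.integral_hasStrictDerivAt s0 r).hasDerivAt
  have hBcont : Continuous Bf := by
    apply continuous_iff_continuousAt.mpr
    exact fun r => (hBd r).continuousAt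
  have hBs0 : Bf s0 = 0 := intervalIntegral.integral_same
  -- Claim D : explicit formula for btil
  have hformula : ∀ t ∈ Ici s0, btil t = Real.exp (-(Bf t)) / s0 := by
    intro t ht
    have hbtilcont : ContinuousOn btil (Ici s0) := fun x hx => (hbtil x hx).continuousWithinAt
    have key : ∀ x ∈ Icc s0 t, btil x * Real.exp (Bf x) = btil s0 * Real.exp (Bf s0) := by
      apply constant_of_has_deriv_right_zero
      · exact (hbtilcont.mono Icc_subset_Ici_self).mul
          (Real.continuous_exp.comp hBcont).continuousOn
      · intro x hx
        have hx1 : s0 ≤ x := hx.1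
        have h1 : HasDerivWithinAt btil (-(b x * btil x)) (Ici x) x :=
          (hbtil x hx1).mono (Ici_subset_Ici.mpr hx1)
        have h2 : HasDerivAt (fun r => Real.exp (Bf r)) (Real.exp (Bf x) * b (max x s0)) x :=
          (hBd x).exp
        have h3 := h1.mul h2.hasDerivWithinAt
        have h4 : -(b x * btil x) * Real.exp (Bf x)
            + btil x * (Real.exp (Bf x) * b (max x s0)) = 0 := by
          rw [max_eq_left hx1]; ring
        rw [h4] at h3
        exact h3
    have hkey := key t ⟨ht, le_rfl⟩
    rw [hBs0, Real.exp_zero, mul_one, hbtil0] at hkey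
    rw [Real.exp_neg, eq_div_iff (ne_of_gt hs0), inv_eq_one_div,
      eq_div_iff (Real.exp_ne_zero _)]
    calc btil t * s0 * Real.exp (Bf t) = btil t * Real.exp (Bf t) * s0 := by ring
      _ = 1 / s0 * s0 := by rw [hkey]
      _ = 1 := by field_simp
  -- Claim E : the phase is close to log((t+c)/(s0+c))
  have hEhalf : ∀ t ∈ Ici s0, |Bf t - (Real.log (t + c) - Real.log (s0 + c))| ≤ eps / 2 := by
    intro t ht
    have htp : 0 < t := htpos t ht
    have hGcont : ContinuousOn (fun r => Bf r - Real.log (r + c)) (Icc s0 t) := by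
      apply hBcont.continuousOn.sub
      apply ContinuousOn.log ((continuous_id.add continuous_const).continuousOn)
      intro x hx
      exact ne_of_gt (htcpos x hx.1)
    have hGd : ∀ x ∈ Ioo s0 t, HasDerivWithinAt (fun r => Bf r - Real.log (r + c))
        (b x - (x + c)⁻¹) (Ioi x) x := by
      intro x hx
      have hx1 : s0 ≤ x := hx.1.le
      have h1 : HasDerivAt Bf (b x) x := by
        have := hBd x; rwa [max_eq_left hx1] at this
      have h2 : HasDerivAt (fun r : ℝ => Real.log (r + c)) ((x + c)⁻¹) x := by
        simpa using ((hasDerivAt_id x).add_const c).log (ne_of_gt (htcpos x hx1))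
      exact (h1.sub h2).hasDerivWithinAt
    have hgint : IntegrableOn (fun τ => 4 * Real.sqrt J * τ ^ ((1 - gamma) / 2)) (Icc s0 t) := by
      apply ContinuousOn.integrableOn_Icc
      exact continuousOn_const.mul (ContinuousOn.rpow_const continuousOn_id
        (fun x hx => Or.inl (ne_of_gt (lt_of_lt_of_le hs0 hx.1))))
    have hbnd : ∀ x ∈ Ioo s0 t, |b x - (x + c)⁻¹| ≤
        4 * Real.sqrt J * x ^ ((1 - gamma) / 2) := fun x hx => hbc x hx.1.le
    have habs := abs_sub_le_integral_aux (f' := fun x => b x - (x + c)⁻¹)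
      ht hGcont hGd hgint hbnd
    have hIval : ∫ y in s0..t, 4 * Real.sqrt J * y ^ ((1 - gamma) / 2)
        ≤ 8 / (gamma - 3) * (Real.sqrt J * s0 ^ ((3 - gamma) / 2)) := by
      have hne1 : (1 - gamma) / 2 ≠ -1 := by
        intro hcon
        rw [div_eq_iff (by norm_num : (2:ℝ) ≠ 0)] at hcon
        linarith
      have hnotmem : (0:ℝ) ∉ Set.uIcc s0 t := by
        rw [uIcc_of_le ht]
        intro hmem
        rw [mem_Icc] at hmem
        linarith [hmem.1]
      rw [intervalIntegral.integral_const_mul, integral_rpow (Or.inr ⟨hne1, hnotmem⟩),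
        show (1 - gamma) / 2 + 1 = (3 - gamma) / 2 by ring]
      have hXnn : (0:ℝ) ≤ t ^ ((3 - gamma) / 2) := Real.rpow_nonneg htp.le _
      have hdiv : (t ^ ((3 - gamma) / 2) - s0 ^ ((3 - gamma) / 2)) / ((3 - gamma) / 2)
          ≤ s0 ^ ((3 - gamma) / 2) * (2 / (gamma - 3)) := by
        rw [div_le_iff_of_neg (by linarith : (3 - gamma) / 2 < 0)]
        have : s0 ^ ((3 - gamma) / 2) * (2 / (gamma - 3)) * ((3 - gamma) / 2)
            = -(s0 ^ ((3 - gamma) / 2)) := by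
          field_simp
          ring
        rw [this]
        linarith
      calc 4 * Real.sqrt J *
            ((t ^ ((3 - gamma) / 2) - s0 ^ ((3 - gamma) / 2)) / ((3 - gamma) / 2))
          ≤ 4 * Real.sqrt J * (s0 ^ ((3 - gamma) / 2) * (2 / (gamma - 3))) := by
            apply mul_le_mul_of_nonneg_left hdiv (by positivity)
        _ = 8 / (gamma - 3) * (Real.sqrt J * s0 ^ ((3 - gamma) / 2)) := by
            field_simp; ring
    -- Claim F : the smallness condition on s0
    have hF : 8 / (gamma - 3) * (Real.sqrt J * s0 ^ ((3 - gamma) / 2)) ≤ eps / 2 := by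
      rcases eq_or_lt_of_le hJ0 with hJz | hJpos
      · rw [← hJz, Real.sqrt_zero]
        have : 8 / (gamma - 3) * ((0:ℝ) * s0 ^ ((3 - gamma) / 2)) = 0 := by ring
        rw [this]
        positivity
      · have hsJpos : 0 < Real.sqrt J := Real.sqrt_pos.mpr hJpos
        have hX : (0:ℝ) < J / eps ^ 2 := div_pos hJpos (pow_pos heps0 2)
        have hCpos : (0:ℝ) < (16 / (gamma - 3)) ^ (2 / (gamma - 3)) :=
          Real.rpow_pos_of_pos (by positivity) _
        have hstep : ((16 / (gamma - 3)) ^ (2 / (gamma - 3)) *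
            (J / eps ^ 2) ^ (1 / (gamma - 3))) ^ ((gamma - 3) / 2) ≤ s0 ^ ((gamma - 3) / 2) := by
          apply Real.rpow_le_rpow _ hs0large (by positivity)
          positivity
        have hleft : ((16 / (gamma - 3)) ^ (2 / (gamma - 3)) *
            (J / eps ^ 2) ^ (1 / (gamma - 3))) ^ ((gamma - 3) / 2)
            = 16 / (gamma - 3) * Real.sqrt J / eps := by
          rw [Real.mul_rpow hCpos.le (Real.rpow_nonneg hX.le _),
            ← Real.rpow_mul (by positivity : (0:ℝ) ≤ 16 / (gamma - 3)),
            ← Real.rpow_mul hX.le,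
            show 2 / (gamma - 3) * ((gamma - 3) / 2) = 1 by field_simp,
            show 1 / (gamma - 3) * ((gamma - 3) / 2) = 1 / 2 by field_simp,
            Real.rpow_one, ← Real.sqrt_eq_rpow,
            Real.sqrt_div hJ0, Real.sqrt_sq heps0.le]
          ring
        rw [hleft] at hstep
        have hs0q : (0:ℝ) < s0 ^ ((gamma - 3) / 2) := Real.rpow_pos_of_pos hs0 _
        have hs0inv : s0 ^ ((3 - gamma) / 2) = (s0 ^ ((gamma - 3) / 2))⁻¹ := by
          rw [← Real.rpow_neg hs0.le]
          congr 1; ring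
        have hub : (s0 ^ ((gamma - 3) / 2))⁻¹ ≤ eps * (gamma - 3) / (16 * Real.sqrt J) := by
          rw [inv_le_comm₀ hs0q (by positivity)]
          calc (eps * (gamma - 3) / (16 * Real.sqrt J))⁻¹
              = 16 / (gamma - 3) * Real.sqrt J / eps := by
                field_simp
            _ ≤ s0 ^ ((gamma - 3) / 2) := hstep
        rw [hs0inv]
        calc 8 / (gamma - 3) * (Real.sqrt J * (s0 ^ ((gamma - 3) / 2))⁻¹)
            ≤ 8 / (gamma - 3) * (Real.sqrt J * (eps * (gamma - 3) / (16 * Real.sqrt J))) := by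
              apply mul_le_mul_of_nonneg_left _ (by positivity)
              exact mul_le_mul_of_nonneg_left hub hsJ
          _ = eps / 2 := by
              field_simp
              ring
    have hfinal := le_trans habs (le_trans hIval hF)
    have hrw : Bf t - Real.log (t + c) - (Bf s0 - Real.log (s0 + c))
        = Bf t - (Real.log (t + c) - Real.log (s0 + c)) := by
      rw [hBs0]; ring
    rwa [hrw] at hfinal
  -- final assembly
  intro s hs
  have hsp : 0 < s := htpos s hs
  have hscpos : 0 < s + c := htcpos s hs
  have hform := hformula s hs
  have hGb := hEhalf s hs
  set G := Bf s - (Real.log (s + c) - Real.log (s0 + c)) with hGdef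
  have hexp_eq : Real.exp (-(Bf s)) = (s0 + c) / (s + c) * Real.exp (-G) := by
    rw [show -(Bf s) = Real.log (s0 + c) - Real.log (s + c) + -G by rw [hGdef]; ring,
      Real.exp_add, Real.exp_sub, Real.exp_log hs0c, Real.exp_log hscpos]
  rw [hform, hexp_eq]
  obtain ⟨hGb1, hGb2⟩ := abs_le.mp hGb
  have hh : (0:ℝ) < 1 - eps / 2 := by linarith
  have hEub : Real.exp (-G) ≤ (1 - eps / 2)⁻¹ := by
    have h1 : Real.exp (-G) ≤ Real.exp (eps / 2) := Real.exp_le_exp.mpr (by linarith)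
    have h3 : 1 - eps / 2 ≤ Real.exp (-(eps / 2)) := by
      have := Real.add_one_le_exp (-(eps / 2)); linarith
    have h2 : Real.exp (eps / 2) ≤ (1 - eps / 2)⁻¹ := by
      rw [show Real.exp (eps / 2) = (Real.exp (-(eps / 2)))⁻¹ by rw [Real.exp_neg, inv_inv]]
      exact inv_anti₀ hh h3
    exact h1.trans h2
  have hElb : 1 - eps / 2 ≤ Real.exp (-G) := by
    have h3 := Real.add_one_le_exp (-G)
    have h4 : Real.exp (-(eps/2)) ≤ Real.exp (-G) := Real.exp_le_exp.mpr (by linarith)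
    have h5 := Real.add_one_le_exp (-(eps/2))
    linarith
  have hEpos : 0 < Real.exp (-G) := Real.exp_pos _
  -- algebraic two-sided bounds
  have hq1 : (0:ℝ) ≤ (s0 + c) * s := by positivity
  have hss : s0 ≤ s := mem_Ici.mp hs
  have hepsss : eps * s0 * s0 ≤ eps * s * s0 :=
    mul_le_mul_of_nonneg_right (mul_le_mul_of_nonneg_left hss heps0.le) hs0.le
  have hA1 : (1 - eps) * ((s0 + c) * s) ≤ (s + c) * s0 := by
    rcases le_or_gt 0 c with hc0 | hc0
    · nlinarith [mul_le_mul_of_nonneg_right hchigh hsp.le, mul_nonneg hc0 hs0.le]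
    · have h5 : -c ≤ eps * s0 := by nlinarith [mul_neg_of_pos_of_neg heps0 hc0]
      nlinarith [mul_nonneg (mul_nonneg (by linarith : (0:ℝ) ≤ 1 - eps)
        (by linarith : (0:ℝ) ≤ -c)) hsp.le, mul_le_mul_of_nonneg_right h5 hs0.le, hepsss]
  have hA2 : (s + c) * s0 ≤ (1 + eps) * ((s0 + c) * s) := by
    rcases le_or_gt 0 c with hc0 | hc0
    · have haux : (0:ℝ) ≤ (1 + eps) * s - s0 := by
        nlinarith [mul_nonneg heps0.le hsp.le]
      nlinarith [mul_nonneg hc0 haux, mul_nonneg heps0.le (mul_nonneg hs0.le hsp.le)]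
    · have h5 : (1 + eps) * (-c) ≤ eps * s0 := by linarith
      nlinarith [mul_le_mul_of_nonneg_right h5 hsp.le,
        mul_nonneg (by linarith : (0:ℝ) ≤ -c) hs0.le, hepsss]
  have hrew : (s0 + c) / (s + c) * Real.exp (-G) / s0
      = (s0 + c) * Real.exp (-G) / ((s + c) * s0) := by
    rw [div_mul_eq_mul_div, div_div]
  rw [hrew]
  constructor
  · rw [div_le_div_iff₀ hsp (by positivity)]
    have hcoefl : (1 - 2 * eps) * (1 + eps) ≤ 1 - eps / 2 := by nlinarith [sq_nonneg eps]
    calc (1 - 2 * eps) * ((s + c) * s0)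
        ≤ (1 - 2 * eps) * ((1 + eps) * ((s0 + c) * s)) := by
          apply mul_le_mul_of_nonneg_left hA2 (by linarith)
      _ = (1 - 2 * eps) * (1 + eps) * ((s0 + c) * s) := by ring
      _ ≤ (1 - eps / 2) * ((s0 + c) * s) := mul_le_mul_of_nonneg_right hcoefl hq1
      _ ≤ Real.exp (-G) * ((s0 + c) * s) := mul_le_mul_of_nonneg_right hElb hq1
      _ = (s0 + c) * Real.exp (-G) * s := by ring
  · rw [div_le_div_iff₀ (by positivity) hsp]
    have hE2 : Real.exp (-G) * (1 - eps / 2) ≤ 1 := by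
      have := mul_le_mul_of_nonneg_right hEub hh.le
      rwa [inv_mul_cancel₀ (ne_of_gt hh)] at this
    have hpoly : 1 ≤ (1 + 2 * eps) * (1 - eps) * (1 - eps / 2) := by
      nlinarith [mul_nonneg (mul_nonneg heps0.le heps0.le) heps0.le, sq_nonneg eps,
        mul_le_mul_of_nonneg_left heps50 (mul_pos heps0 heps0).le]
    have hE3 : Real.exp (-G) ≤ (1 + 2 * eps) * (1 - eps) := by
      nlinarith [hE2, hpoly, Real.exp_pos (-G), hh]
    calc (s0 + c) * Real.exp (-G) * s
        = Real.exp (-G) * ((s0 + c) * s) := by ring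
      _ ≤ (1 + 2 * eps) * (1 - eps) * ((s0 + c) * s) :=
          mul_le_mul_of_nonneg_right hE3 hq1
      _ = (1 + 2 * eps) * ((1 - eps) * ((s0 + c) * s)) := by ring
      _ ≤ (1 + 2 * eps) * ((s + c) * s0) := by
          apply mul_le_mul_of_nonneg_left hA1 (by linarith)
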